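/- Let p : X → Y be a spread that restricts to a covering map X₁ → Y₁ between portly subsets X₁ ⊆ X and Y₁ ⊆ Y. Then p is a complete spread if and only if for every path γ : [0,1] → Y, every partial lift γ̂ : [0,1) → X₁ of γ extends continuously to a lift [0,1] → X of γ. -/

import Mathlib

/-- A subset `U` of a topological space `X` is *portly* if it is open, dense, and
locally connected in `X`. -/
def Portly (X : Type*) [TopologicalSpace X] (U : Set X) : Prop :=
  IsOpen U ∧ Dense U ∧ ∀ W : Set X, IsOpen W → IsConnected W → IsConnected (W ∩ U)

/-- `V` is a connected component of `S`. -/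
def IsComponentOf {X : Type*} [TopologicalSpace X] (V S : Set X) : Prop :=
  ∃ x ∈ S, V = connectedComponentIn S x

/-- A *spread* is a continuous map such that the connected components of preimages of
open subsets of the base form a basis for the topology of the total space. -/
def IsSpread {X Y : Type*} [TopologicalSpace X] [TopologicalSpace Y] (p : X → Y) : Prop :=
  Continuous p ∧ TopologicalSpace.IsTopologicalBasis
    {V : Set X | ∃ U : Set Y, IsOpen U ∧ IsComponentOf V (p ⁻¹' U)}

/-- `p` maps `V` homeomorphically onto `U`. -/
def MapsHomeomorphicallyOnto {X Y : Type*} [TopologicalSpace X] [TopologicalSpace Y]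
    (p : X → Y) (V : Set X) (U : Set Y) : Prop :=
  ∃ h : V ≃ₜ U, ∀ v : V, (h v : Y) = p v

/-- The ordinary locus in the base of a spread: points admitting an open neighborhood
evenly covered by `p`. -/
def OrdBase {X Y : Type*} [TopologicalSpace X] [TopologicalSpace Y] (p : X → Y) : Set Y :=
  {y | ∃ U : Set Y, IsOpen U ∧ y ∈ U ∧
    ∀ V : Set X, IsComponentOf V (p ⁻¹' U) → MapsHomeomorphicallyOnto p V U}

/-- The ordinary locus in the total space of a spread. -/
def OrdTotal {X Y : Type*} [TopologicalSpace X] [TopologicalSpace Y] (p : X → Y) : Set X :=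
  p ⁻¹' OrdBase p

/-- A *complete* spread: every monotone choice of connected components of preimages of
connected open neighborhoods of a point of the closure of the image has nonempty
intersection. -/
def IsCompleteSpread {X Y : Type*} [TopologicalSpace X] [TopologicalSpace Y]
    (p : X → Y) : Prop :=
  IsSpread p ∧ ∀ y ∈ closure (Set.range p),
    ∀ χ : {U : Set Y // IsOpen U ∧ IsConnected U ∧ y ∈ U} → Set X,
      (∀ U, IsComponentOf (χ U) (p ⁻¹' U.1)) →
      (∀ U V, U.1 ⊆ V.1 → χ U ⊆ χ V) →
      (⋂ U, χ U).Nonempty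

/-- A *branched covering* is a complete surjective spread between connected spaces whose
ordinary loci are portly. -/
def IsBranchedCovering {X Y : Type*} [TopologicalSpace X] [TopologicalSpace Y]
    (p : X → Y) : Prop :=
  IsCompleteSpread p ∧ Function.Surjective p ∧ ConnectedSpace X ∧ ConnectedSpace Y ∧
    Portly X (OrdTotal p) ∧ Portly Y (OrdBase p)
open Set Filter Topology

private lemma floor_piece {Z : Type*} [TopologicalSpace Z] (x : ℕ → Z)
    (q : ∀ n, Path (x n) (x (n + 1))) (n : ℕ) (t : ℝ) (ht : t ∈ Set.Icc (n : ℝ) (n + 1)) :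
    (q ⌊t⌋₊).extend (t - ⌊t⌋₊) = (q n).extend (t - n) := by
  rcases lt_or_ge t ((n : ℝ) + 1) with hlt | hge
  · have hfl : ⌊t⌋₊ = n := by
      rw [Nat.floor_eq_iff (le_trans (Nat.cast_nonneg n) ht.1)]
      exact ⟨ht.1, by push_cast; linarith⟩
    rw [hfl]
  · have hteq : t = (n : ℝ) + 1 := le_antisymm ht.2 hge
    subst hteq
    have hfl : ⌊(n : ℝ) + 1⌋₊ = n + 1 := by
      rw [show ((n : ℝ) + 1) = ((n + 1 : ℕ) : ℝ) by push_cast; ring, Nat.floor_natCast]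
    rw [hfl]
    push_cast
    rw [show (n : ℝ) + 1 - ((n : ℝ) + 1) = 0 by ring, Path.extend_zero,
      show (n : ℝ) + 1 - (n : ℝ) = 1 by ring, Path.extend_one]

lemma concat_paths {Z : Type*} [TopologicalSpace Z] (x : ℕ → Z) (q : ∀ n, Path (x n) (x (n + 1))) :
    ∃ f : ℝ → Z, Continuous f ∧
      ∀ (n : ℕ) (t : ℝ), t ∈ Set.Icc (n : ℝ) (n + 1) → f t = (q n).extend (t - n) := by
  set f : ℝ → Z := fun t => (q ⌊t⌋₊).extend (t - ⌊t⌋₊) with hf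
  have hpiece : ∀ (n : ℕ) (t : ℝ), t ∈ Set.Icc (n : ℝ) (n + 1) → f t = (q n).extend (t - n) :=
    fun n t ht => floor_piece x q n t ht
  refine ⟨f, ?_, hpiece⟩
  rw [continuous_iff_continuousAt]
  intro t₀
  by_cases h₀ : ∃ m : ℕ, t₀ = (m : ℝ) + 1
  · obtain ⟨m, rfl⟩ := h₀
    set t₀ : ℝ := (m : ℝ) + 1 with ht₀
    have hmem : (t₀ : ℝ) ∈ Set.Icc ((m : ℝ)) ((m : ℝ) + 1) := by
      constructor <;> [linarith; linarith]
    have h1 : ContinuousWithinAt f (Set.Iic t₀) t₀ := by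
      have hbase : ContinuousWithinAt (fun t => (q m).extend (t - m)) (Set.Iic t₀) t₀ :=
        ((q m).continuous_extend.comp (continuous_id.sub continuous_const)).continuousWithinAt
      refine hbase.congr_of_eventuallyEq ?_ (hpiece m t₀ hmem)
      have hmemnhds : Set.Ioc ((m : ℝ)) t₀ ∈ 𝓝[Set.Iic t₀] t₀ := by
        rw [show Set.Ioc ((m : ℝ)) t₀ = Set.Ioi (m : ℝ) ∩ Set.Iic t₀ by
          ext z; simp [Set.mem_Ioc, Set.mem_Ioi, Set.mem_Iic, and_comm]]
        exact Filter.inter_mem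
          (mem_nhdsWithin_of_mem_nhds (isOpen_Ioi.mem_nhds (by simp only [Set.mem_Ioi, ht₀]; linarith)))
          self_mem_nhdsWithin
      filter_upwards [hmemnhds] with t ht
      exact hpiece m t ⟨le_of_lt ht.1, ht.2⟩
    have h2 : ContinuousWithinAt f (Set.Ici t₀) t₀ := by
      have hbase : ContinuousWithinAt (fun t => (q (m + 1)).extend (t - (m + 1))) (Set.Ici t₀) t₀ :=
        ((q (m + 1)).continuous_extend.comp (continuous_id.sub continuous_const)).continuousWithinAt
      refine hbase.congr_of_eventuallyEq ?_ ?_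
      · have hmemnhds : Set.Ico t₀ (t₀ + 1) ∈ 𝓝[Set.Ici t₀] t₀ := by
          rw [show Set.Ico t₀ (t₀ + 1) = Set.Ici t₀ ∩ Set.Iio (t₀ + 1) by
            ext z; simp [Set.mem_Ico, Set.mem_Ici, Set.mem_Iio]]
          exact Filter.inter_mem self_mem_nhdsWithin
            (mem_nhdsWithin_of_mem_nhds (isOpen_Iio.mem_nhds (by simp only [Set.mem_Iio]; linarith)))
        filter_upwards [hmemnhds] with t ht
        have : t ∈ Set.Icc (((m + 1 : ℕ)) : ℝ) ((m + 1 : ℕ) + 1) := by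
          constructor <;> push_cast <;> [exact ht.1; linarith [ht.2]]
        have := hpiece (m + 1) t this
        rw [this]; push_cast; ring_nf
      · have : t₀ ∈ Set.Icc (((m + 1 : ℕ)) : ℝ) ((m + 1 : ℕ) + 1) :=
          ⟨by rw [ht₀]; push_cast; linarith, by rw [ht₀]; push_cast; linarith⟩
        have := hpiece (m + 1) t₀ this
        rw [this]; push_cast; ring_nf
    have := h1.union h2
    rwa [Set.Iic_union_Ici, continuousWithinAt_univ] at this
  · -- t₀ is not of the form m + 1; the floor is locally constant near t₀
    set n := ⌊t₀⌋₊ with hn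
    have hbase : ContinuousAt (fun t => (q n).extend (t - n)) t₀ :=
      ((q n).continuous_extend.comp (continuous_id.sub continuous_const)).continuousAt
    refine hbase.congr ?_
    rcases lt_or_ge t₀ 1 with hlt1 | hge1
    · have hn0 : n = 0 := Nat.floor_eq_zero.mpr hlt1
      have : ∀ t ∈ Set.Iio (1 : ℝ), f t = (q n).extend (t - n) := by
        intro t ht
        have h2 : ⌊t⌋₊ = 0 := Nat.floor_eq_zero.mpr ht
        show (q ⌊t⌋₊).extend (t - ⌊t⌋₊) = _
        rw [h2, hn0]
      filter_upwards [isOpen_Iio.mem_nhds hlt1] with t ht using (this t ht).symm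
    · have hnle : (n : ℝ) ≤ t₀ := Nat.floor_le (by linarith)
      have hlt : t₀ < (n : ℝ) + 1 := Nat.lt_floor_add_one t₀
      have hne : (n : ℝ) ≠ t₀ := by
        intro heq
        have hn1 : 1 ≤ n := by
          by_contra hc
          push_neg at hc
          interval_cases n
          · simp at heq; linarith
        exact h₀ ⟨n - 1, by rw [← heq]; push_cast [hn1]; ring⟩
      have hnlt : (n : ℝ) < t₀ := lt_of_le_of_ne hnle hne
      have : ∀ t ∈ Set.Ioo ((n : ℝ)) ((n : ℝ) + 1), f t = (q n).extend (t - n) := by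
        intro t ht
        have h0t : 0 ≤ t := le_trans (Nat.cast_nonneg n) (le_of_lt ht.1)
        have h2 : ⌊t⌋₊ = n := by
          rw [Nat.floor_eq_iff h0t]
          exact ⟨le_of_lt ht.1, ht.2⟩
        show (q ⌊t⌋₊).extend (t - ⌊t⌋₊) = _
        rw [h2]
      filter_upwards [isOpen_Ioo.mem_nhds ⟨hnlt, hlt⟩] with t ht using (this t ht).symm
open Set Filter Topology

lemma antitone_connected_basis {Y : Type*} [TopologicalSpace Y]
    [FirstCountableTopology Y] [LocallyConnectedSpace Y] (y : Y) :
    ∃ U : ℕ → Set Y, (∀ n, IsOpen (U n) ∧ y ∈ U n ∧ IsConnected (U n)) ∧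
      (∀ n, U (n + 1) ⊆ U n) ∧ ∀ s ∈ 𝓝 y, ∃ n, U n ⊆ s := by
  obtain ⟨B, hB⟩ := (𝓝 y).exists_antitone_basis
  have key := locallyConnectedSpace_iff_subsets_isOpen_isConnected.mp inferInstance y
  have step : ∀ S : Set Y, IsOpen S → y ∈ S → ∀ n : ℕ,
      ∃ T : Set Y, T ⊆ S ∧ T ⊆ B n ∧ IsOpen T ∧ y ∈ T ∧ IsConnected T := by
    intro S hS hyS n
    obtain ⟨T, hT1, hT2, hT3, hT4⟩ :=
      key (S ∩ B n) (Filter.inter_mem (hS.mem_nhds hyS) (hB.1.mem_of_mem trivial))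
    exact ⟨T, hT1.trans inter_subset_left, hT1.trans inter_subset_right, hT2, hT3, hT4⟩
  choose! T hT1 hT2 hT3 hT4 hT5 using step
  let U : ℕ → Set Y := fun n => Nat.rec (T Set.univ 0) (fun n ih => T ih (n + 1)) n
  have hU0 : U 0 = T Set.univ 0 := rfl
  have hUsucc : ∀ n, U (n + 1) = T (U n) (n + 1) := fun n => rfl
  have hprop : ∀ n, (IsOpen (U n) ∧ y ∈ U n) ∧ IsConnected (U n) ∧ U n ⊆ B n := by
    intro n
    induction n with
    | zero =>
      rw [hU0]
      exact ⟨⟨hT3 _ isOpen_univ (mem_univ y) 0, hT4 _ isOpen_univ (mem_univ y) 0⟩,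
        hT5 _ isOpen_univ (mem_univ y) 0, hT2 _ isOpen_univ (mem_univ y) 0⟩
    | succ n ih =>
      rw [hUsucc]
      exact ⟨⟨hT3 _ ih.1.1 ih.1.2 (n + 1), hT4 _ ih.1.1 ih.1.2 (n + 1)⟩,
        hT5 _ ih.1.1 ih.1.2 (n + 1), hT2 _ ih.1.1 ih.1.2 (n + 1)⟩
  refine ⟨U, fun n => ⟨(hprop n).1.1, (hprop n).1.2, (hprop n).2.1⟩, fun n => ?_, fun s hs => ?_⟩
  · rw [hUsucc]
    exact hT1 _ (hprop n).1.1 (hprop n).1.2 (n + 1)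
  · obtain ⟨n, -, hn⟩ := hB.1.mem_iff.mp hs
    exact ⟨n, (hprop n).2.2.trans hn⟩

section Helpers

variable {X Y : Type*} [TopologicalSpace X] [TopologicalSpace Y]

open unitInterval in
/-- Forward direction: a complete spread has the lifting-extension property. -/
lemma forward_dir [T2Space Y] [LocallyConnectedSpace Y]
    (p : X → Y) (hp : IsSpread p) (hcomplete : IsCompleteSpread p)
    (γ : C(unitInterval, Y)) (γhat : {t : unitInterval // (t : ℝ) < 1} → X)
    (hcont : Continuous γhat) (hlift : ∀ t, p (γhat t) = γ t.1) :
    ∃ Γ : unitInterval → X, Continuous Γ ∧ (∀ t, p (Γ t) = γ t) ∧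
      ∀ (t : unitInterval) (h : (t : ℝ) < 1), Γ t = γhat ⟨t, h⟩ := by
  classical
  set y := γ 1 with hy
  -- thresholds for open neighborhoods of y
  have thresh : ∀ U : Set Y, IsOpen U → y ∈ U →
      ∃ a : unitInterval, a < 1 ∧ ∀ s : unitInterval, a < s → γ s ∈ U := by
    intro U hU hyU
    have hmem : γ ⁻¹' U ∈ 𝓝 (1 : unitInterval) :=
      (hU.preimage γ.continuous).mem_nhds hyU
    obtain ⟨l, hl, hsub⟩ := exists_Ioc_subset_of_mem_nhds hmem ⟨0, zero_lt_one⟩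
    exact ⟨l, hl, fun s hs => hsub ⟨hs, le_one s⟩⟩
  -- the index type of the completeness condition
  set Idx := {U : Set Y // IsOpen U ∧ IsConnected U ∧ y ∈ U} with hIdx
  choose a ha₁ ha₂ using fun u : Idx => thresh u.1 u.2.1 u.2.2.2
  choose tt htt₁ htt₂ using fun u : Idx => exists_between (ha₁ u)
  have httR : ∀ u : Idx, ((tt u : ℝ) < 1) := fun u => by exact_mod_cast htt₂ u
  set pt : Idx → X := fun u => γhat ⟨tt u, httR u⟩ with hpt
  set χ : Idx → Set X := fun u => connectedComponentIn (p ⁻¹' u.1) (pt u) with hχ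
  have hptmem : ∀ u : Idx, pt u ∈ p ⁻¹' u.1 := by
    intro u
    show p (γhat _) ∈ u.1
    rw [hlift]
    exact ha₂ u (tt u) (htt₁ u)
  -- tail points lie in χ u
  have L1 : ∀ (u : Idx) (s : unitInterval) (hs1 : a u < s) (hs2 : (s : ℝ) < 1),
      γhat ⟨s, hs2⟩ ∈ χ u := by
    intro u s hs1 hs2
    have hJpre : IsPreconnected (Set.Ioo ((a u : ℝ)) 1) := isPreconnected_Ioo
    haveI : PreconnectedSpace (Set.Ioo ((a u : ℝ)) 1) := Subtype.preconnectedSpace hJpre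
    have hwI : ∀ w : Set.Ioo ((a u : ℝ)) 1, (w : ℝ) ∈ unitInterval :=
      fun w => ⟨le_trans (a u).2.1 (le_of_lt w.2.1), le_of_lt w.2.2⟩
    set g : Set.Ioo ((a u : ℝ)) 1 → X :=
      fun w => γhat ⟨⟨w.1, hwI w⟩, w.2.2⟩ with hg
    have hgc : Continuous g :=
      hcont.comp (Continuous.subtype_mk (continuous_subtype_val.subtype_mk _) _)
    have hrange : Set.range g ⊆ p ⁻¹' u.1 := by
      rintro _ ⟨w, rfl⟩
      show p (γhat _) ∈ u.1
      rw [hlift]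
      exact ha₂ u ⟨w.1, hwI w⟩ (by exact_mod_cast w.2.1)
    have hptr : pt u ∈ Set.range g := by
      refine ⟨⟨tt u, by exact_mod_cast htt₁ u, httR u⟩, rfl⟩
    have hsub : Set.range g ⊆ χ u :=
      (isPreconnected_range hgc).subset_connectedComponentIn hptr hrange
    have hs1' : (s : ℝ) ∈ Set.Ioo ((a u : ℝ)) 1 := ⟨by exact_mod_cast hs1, hs2⟩
    exact hsub ⟨⟨s, hs1'⟩, rfl⟩
  -- monotonicity
  have hmono : ∀ u v : Idx, u.1 ⊆ v.1 → χ u ⊆ χ v := by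
    intro u v huv
    have hmax : max (a u) (a v) < 1 := max_lt (ha₁ u) (ha₁ v)
    obtain ⟨s, hs1, hs2⟩ := exists_between hmax
    have hs2' : (s : ℝ) < 1 := by exact_mod_cast hs2
    have hmu : γhat ⟨s, hs2'⟩ ∈ χ u := L1 u s (lt_of_le_of_lt (le_max_left _ _) hs1) hs2'
    have hmv : γhat ⟨s, hs2'⟩ ∈ χ v := L1 v s (lt_of_le_of_lt (le_max_right _ _) hs1) hs2'
    calc χ u = connectedComponentIn (p ⁻¹' u.1) (γhat ⟨s, hs2'⟩) := connectedComponentIn_eq hmu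
    _ ⊆ connectedComponentIn (p ⁻¹' v.1) (γhat ⟨s, hs2'⟩) :=
        connectedComponentIn_mono _ (Set.preimage_mono huv)
    _ = χ v := (connectedComponentIn_eq hmv).symm
  have hcompOf : ∀ u : Idx, IsComponentOf (χ u) (p ⁻¹' u.1) := fun u =>
    ⟨pt u, hptmem u, rfl⟩
  -- y lies in the closure of the range of p
  have hyc : y ∈ closure (Set.range p) := by
    rw [mem_closure_iff]
    intro O hO hyO
    obtain ⟨aO, haO, h2⟩ := thresh O hO hyO
    obtain ⟨s, hs1, hs2⟩ := exists_between haO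
    have hs2' : (s : ℝ) < 1 := by exact_mod_cast hs2
    exact ⟨γ s, h2 s hs1, γhat ⟨s, hs2'⟩, hlift ⟨s, hs2'⟩⟩
  obtain ⟨x, hx⟩ := hcomplete.2 y hyc χ hcompOf hmono
  rw [Set.mem_iInter] at hx
  -- p x = y
  have hpx : p x = y := by
    by_contra hne
    obtain ⟨U', hsub', hU'o, hyU', hU'c⟩ :=
      locallyConnectedSpace_iff_subsets_isOpen_isConnected.mp inferInstance y ({p x}ᶜ)
        (isOpen_compl_singleton.mem_nhds (by simp [Ne.symm hne]))
    have := connectedComponentIn_subset (p ⁻¹' U') (pt ⟨U', hU'o, hU'c, hyU'⟩)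
      (hx ⟨U', hU'o, hU'c, hyU'⟩ : x ∈ χ ⟨U', hU'o, hU'c, hyU'⟩)
    exact hsub' this rfl
  set Γ : unitInterval → X := fun t => if h : (t : ℝ) < 1 then γhat ⟨t, h⟩ else x with hΓ
  have hΓeq : ∀ (t : unitInterval) (h : (t : ℝ) < 1), Γ t = γhat ⟨t, h⟩ := by
    intro t h
    simp only [hΓ, dif_pos h]
  have hone : ∀ t : unitInterval, ¬((t : ℝ) < 1) → t = 1 := by
    intro t h
    exact Subtype.ext (le_antisymm t.2.2 (by exact_mod_cast not_lt.mp h))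
  have hΓ1 : Γ 1 = x := by
    simp only [hΓ]
    rw [dif_neg (by norm_num)]
  refine ⟨Γ, ?_, ?_, hΓeq⟩
  · rw [continuous_iff_continuousAt]
    intro t₀
    by_cases h₀ : (t₀ : ℝ) < 1
    · have hO : IsOpen {t : unitInterval | (t : ℝ) < 1} :=
        isOpen_Iio.preimage continuous_subtype_val
      have hres : Continuous fun w : {t : unitInterval | (t : ℝ) < 1} => Γ w.1 := by
        have h2 : (fun w : {t : unitInterval | (t : ℝ) < 1} => Γ w.1) =
            fun w : {t : unitInterval | (t : ℝ) < 1} => γhat ⟨w.1, w.2⟩ := by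
          funext w
          exact hΓeq w.1 w.2
        rw [h2]
        exact hcont.comp (continuous_subtype_val.subtype_mk _)
      have hco : ContinuousOn Γ {t : unitInterval | (t : ℝ) < 1} :=
        continuousOn_iff_continuous_restrict.mpr hres
      exact hco.continuousAt (hO.mem_nhds h₀)
    · have ht1 : t₀ = 1 := hone t₀ h₀
      subst ht1
      rw [ContinuousAt, hΓ1]
      intro N hN
      rw [Filter.mem_map]
      obtain ⟨V, ⟨U, hUo, hVcomp⟩, hxV, hVN⟩ := hp.2.mem_nhds_iff.mp hN
      obtain ⟨x₀, hx₀, hVeq⟩ := hVcomp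
      have hxV' : x ∈ connectedComponentIn (p ⁻¹' U) x₀ := hVeq ▸ hxV
      have hVeq' : V = connectedComponentIn (p ⁻¹' U) x := by
        rw [hVeq]; exact connectedComponentIn_eq hxV'
      have hyU : y ∈ U := by
        rw [← hpx]
        exact connectedComponentIn_subset (p ⁻¹' U) x₀ hxV'
      obtain ⟨U', hsub', hU'o, hyU', hU'c⟩ :=
        locallyConnectedSpace_iff_subsets_isOpen_isConnected.mp inferInstance y U
          (hUo.mem_nhds hyU)
      set u' : Idx := ⟨U', hU'o, hU'c, hyU'⟩ with hu'
      have hxu' : x ∈ χ u' := hx u'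
      have hχsub : χ u' ⊆ V := by
        calc χ u' = connectedComponentIn (p ⁻¹' U') x := connectedComponentIn_eq hxu'
        _ ⊆ connectedComponentIn (p ⁻¹' U) x :=
            connectedComponentIn_mono _ (Set.preimage_mono hsub')
        _ = V := hVeq'.symm
      have hsubN : Set.Ioi (a u') ⊆ Γ ⁻¹' N := by
        intro s hs
        by_cases hs1 : (s : ℝ) < 1
        · rw [Set.mem_preimage, hΓeq s hs1]
          exact hVN (hχsub (L1 u' s hs hs1))
        · rw [Set.mem_preimage, hone s hs1, hΓ1]
          exact hVN hxV
      exact Filter.mem_of_superset (isOpen_Ioi.mem_nhds (ha₁ u')) hsubN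
  · intro t
    by_cases h : (t : ℝ) < 1
    · rw [hΓeq t h, hlift ⟨t, h⟩]
    · rw [hone t h, hΓ1, hpx]

end Helpers

section Backward

variable {X Y : Type*} [TopologicalSpace X] [TopologicalSpace Y]

lemma backward_dir [FirstCountableTopology Y] [LocallyPathConnectedSpace X]
    [LocallyConnectedSpace Y]
    (p : X → Y) (hp : IsSpread p) (X₁ : Set X) (hX₁ : Portly X X₁)
    (H : ∀ γ : C(unitInterval, Y), ∀ γhat : {t : unitInterval // (t : ℝ) < 1} → X,
        Continuous γhat → (∀ t, γhat t ∈ X₁) → (∀ t, p (γhat t) = γ t.1) →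
        ∃ Γ : unitInterval → X, Continuous Γ ∧ (∀ t, p (Γ t) = γ t) ∧
          ∀ (t : unitInterval) (h : (t : ℝ) < 1), Γ t = γhat ⟨t, h⟩) :
    IsCompleteSpread p := by
  classical
  refine ⟨hp, fun y _ χ hχcomp hχmono => ?_⟩
  obtain ⟨U, hUprop, hUsucc, hUbasis⟩ := antitone_connected_basis y
  have hUanti : Antitone U := antitone_nat_of_succ_le hUsucc
  set uu : ℕ → {V : Set Y // IsOpen V ∧ IsConnected V ∧ y ∈ V} :=
    fun n => ⟨U n, (hUprop n).1, (hUprop n).2.2, (hUprop n).2.1⟩ with huu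
  have hχsub : ∀ n, χ (uu n) ⊆ p ⁻¹' (U n) := by
    intro n
    obtain ⟨x₀, hx₀, heq⟩ := hχcomp (uu n)
    rw [heq]
    exact connectedComponentIn_subset _ _
  have hχopen : ∀ n, IsOpen (χ (uu n)) := by
    intro n
    obtain ⟨x₀, hx₀, heq⟩ := hχcomp (uu n)
    rw [heq]
    exact (((hUprop n).1).preimage hp.1).connectedComponentIn
  have hχconn : ∀ n, IsConnected (χ (uu n)) := by
    intro n
    obtain ⟨x₀, hx₀, heq⟩ := hχcomp (uu n)
    rw [heq]
    exact isConnected_connectedComponentIn_iff.mpr hx₀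
  have hport : ∀ n, IsConnected (χ (uu n) ∩ X₁) :=
    fun n => hX₁.2.2 _ (hχopen n) (hχconn n)
  have hopen' : ∀ n, IsOpen (χ (uu n) ∩ X₁) := fun n => (hχopen n).inter hX₁.1
  have hpath : ∀ n, IsPathConnected (χ (uu n) ∩ X₁) :=
    fun n => ((hopen' n).isConnected_iff_isPathConnected).mp (hport n)
  choose xs hxs using fun n => (hport n).nonempty
  have hnext : ∀ n, xs (n + 1) ∈ χ (uu n) ∩ X₁ := fun n =>
    ⟨hχmono (uu (n + 1)) (uu n) (hUsucc n) (hxs (n + 1)).1, (hxs (n + 1)).2⟩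
  have hjoin : ∀ n, JoinedIn (χ (uu n) ∩ X₁) (xs n) (xs (n + 1)) :=
    fun n => (hpath n).joinedIn _ (hxs n) _ (hnext n)
  set q : ∀ n, Path (xs n) (xs (n + 1)) := fun n => (hjoin n).somePath with hq
  have hqmem : ∀ n t, q n t ∈ χ (uu n) ∩ X₁ := fun n => (hjoin n).somePath_mem
  obtain ⟨f, hfc, hfp⟩ := concat_paths xs q
  have F1 : ∀ s : ℝ, 0 ≤ s → ∀ n : ℕ, (n : ℝ) ≤ s → f s ∈ χ (uu n) ∩ X₁ := by
    intro s hs0 n hns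
    set m := ⌊s⌋₊ with hm
    have hsm : s ∈ Set.Icc (m : ℝ) (m + 1) := ⟨Nat.floor_le hs0, (Nat.lt_floor_add_one s).le⟩
    have hsm2 : s - m ∈ unitInterval := ⟨by linarith [hsm.1], by linarith [hsm.2]⟩
    have hfs : f s = q m ⟨s - m, hsm2⟩ := by
      rw [hfp m s hsm]
      exact Path.extend_apply _ hsm2
    rw [hfs]
    have hmn : n ≤ m := Nat.le_floor hns
    exact ⟨hχmono (uu m) (uu n) (hUanti hmn) (hqmem m _).1, (hqmem m _).2⟩
  set r : {t : unitInterval // (t : ℝ) < 1} → ℝ := fun t => (t.1 : ℝ) / (1 - (t.1 : ℝ)) with hr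
  have hrc : Continuous r := by
    apply Continuous.div
    · exact continuous_subtype_val.comp continuous_subtype_val
    · exact continuous_const.sub (continuous_subtype_val.comp continuous_subtype_val)
    · intro t
      have := t.2
      intro hc
      rw [sub_eq_zero] at hc
      exact absurd hc.symm (ne_of_lt this)
  have hr0 : ∀ t, 0 ≤ r t := fun t => div_nonneg t.1.2.1 (by linarith [t.2])
  have hrbound : ∀ (n : ℕ) (t : {t : unitInterval // (t : ℝ) < 1}),
      1 - 1 / ((n : ℝ) + 1) ≤ (t.1 : ℝ) → (n : ℝ) ≤ r t := by
    intro n t hts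
    have h1t : (0 : ℝ) < 1 - (t.1 : ℝ) := by linarith [t.2]
    rw [hr, le_div_iff₀ h1t]
    have hn1 : (0 : ℝ) < (n : ℝ) + 1 := by positivity
    have h2 : (1 : ℝ) - (t.1 : ℝ) ≤ 1 / ((n : ℝ) + 1) := by linarith
    have h3 := mul_le_mul_of_nonneg_left h2 (Nat.cast_nonneg n : (0 : ℝ) ≤ (n : ℝ))
    have h4 : (n : ℝ) * (1 / ((n : ℝ) + 1)) = 1 - 1 / ((n : ℝ) + 1) := by
      field_simp
      ring
    linarith
  set γhat : {t : unitInterval // (t : ℝ) < 1} → X := fun t => f (r t) with hγhat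
  have hcont1 : Continuous γhat := hfc.comp hrc
  have hmem1 : ∀ t, γhat t ∈ X₁ := fun t =>
    (F1 (r t) (hr0 t) 0 (by simpa using hr0 t)).2
  -- thresholds
  have hσn1 : ∀ n : ℕ, (0 : ℝ) < 1 / ((n : ℝ) + 1) := by
    intro n; positivity
  have hσn2 : ∀ n : ℕ, 1 / ((n : ℝ) + 1) ≤ 1 := by
    intro n
    rw [div_le_one (by positivity)]
    simp
  set σ : ℕ → unitInterval := fun n =>
    ⟨1 - 1 / ((n : ℝ) + 1), by constructor <;> [linarith [hσn2 n]; linarith [hσn1 n]]⟩ with hσ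
  have hσc : ∀ n, (σ n : ℝ) = 1 - 1 / ((n : ℝ) + 1) := fun n => rfl
  have hσlt : ∀ n, (σ n : ℝ) < 1 := fun n => by rw [hσc]; linarith [hσn1 n]
  have key2 : ∀ (n : ℕ) (t : unitInterval) (h : (t : ℝ) < 1),
      (σ n : ℝ) ≤ (t : ℝ) → γhat ⟨t, h⟩ ∈ χ (uu n) := by
    intro n t h hts
    exact (F1 _ (hr0 ⟨t, h⟩) n (hrbound n ⟨t, h⟩ (by rw [hσc] at hts; exact hts))).1
  set γfun : unitInterval → Y := fun t => if h : (t : ℝ) < 1 then p (γhat ⟨t, h⟩) else y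
    with hγfun
  have hγfun1 : γfun 1 = y := by
    simp only [hγfun]
    rw [dif_neg (by norm_num)]
  have hone : ∀ t : unitInterval, ¬((t : ℝ) < 1) → t = 1 := by
    intro t h
    exact Subtype.ext (le_antisymm t.2.2 (by exact_mod_cast not_lt.mp h))
  have hγc : Continuous γfun := by
    rw [continuous_iff_continuousAt]
    intro t₀
    by_cases h₀ : (t₀ : ℝ) < 1
    · have hO : IsOpen {t : unitInterval | (t : ℝ) < 1} :=
        isOpen_Iio.preimage continuous_subtype_val
      have hres : Continuous fun w : {t : unitInterval | (t : ℝ) < 1} => γfun w.1 := by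
        have h2 : (fun w : {t : unitInterval | (t : ℝ) < 1} => γfun w.1) =
            fun w : {t : unitInterval | (t : ℝ) < 1} => p (γhat ⟨w.1, w.2⟩) := by
          funext w
          exact dif_pos w.2
        rw [h2]
        exact hp.1.comp (hcont1.comp (continuous_subtype_val.subtype_mk _))
      have hco : ContinuousOn γfun {t : unitInterval | (t : ℝ) < 1} :=
        continuousOn_iff_continuous_restrict.mpr hres
      exact hco.continuousAt (hO.mem_nhds h₀)
    · have ht1 : t₀ = 1 := hone t₀ h₀
      subst ht1
      rw [ContinuousAt, hγfun1]
      intro N hN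
      rw [Filter.mem_map]
      obtain ⟨n, hn⟩ := hUbasis N hN
      have hsubN : Set.Ioi (σ n) ⊆ γfun ⁻¹' N := by
        intro s hs
        by_cases hs1 : (s : ℝ) < 1
        · rw [Set.mem_preimage, show γfun s = p (γhat ⟨s, hs1⟩) from dif_pos hs1]
          have hss : (σ n : ℝ) ≤ (s : ℝ) := le_of_lt (by exact_mod_cast hs)
          exact hn (hχsub n (key2 n s hs1 hss))
        · rw [Set.mem_preimage, hone s hs1, hγfun1]
          exact hn (hUprop n).2.1
      have hσlt' : σ n < 1 := by exact_mod_cast hσlt n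
      exact Filter.mem_of_superset (isOpen_Ioi.mem_nhds hσlt') hsubN
  set γ : C(unitInterval, Y) := ⟨γfun, hγc⟩ with hγdef
  have hlift1 : ∀ t : {t : unitInterval // (t : ℝ) < 1}, p (γhat t) = γ t.1 := by
    intro t
    show p (γhat t) = γfun t.1
    simp only [hγfun]
    rw [dif_pos t.2]
  obtain ⟨Γ, hΓc, hΓlift, hΓeq⟩ := H γ γhat hcont1 hmem1 hlift1
  refine ⟨Γ 1, Set.mem_iInter.mpr fun u => ?_⟩
  obtain ⟨n, hn⟩ := hUbasis u.1 (u.2.1.mem_nhds u.2.2.2)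
  -- the connected tail set
  set G : ℝ → X := fun s => Γ (Set.projIcc 0 1 zero_le_one s) with hG
  have hGc : Continuous G := hΓc.comp continuous_projIcc
  set A : Set X := G '' Set.Icc ((σ n : ℝ)) 1 with hA
  have hApre : IsPreconnected A := isPreconnected_Icc.image G hGc.continuousOn
  have hGeq : ∀ s : ℝ, ∀ hs : s ∈ Set.Icc ((σ n : ℝ)) 1, G s = Γ ⟨s, ⟨le_trans (σ n).2.1 hs.1, hs.2⟩⟩ := by
    intro s hs
    show Γ (Set.projIcc 0 1 zero_le_one s) = _
    rw [Set.projIcc_of_mem zero_le_one ⟨le_trans (σ n).2.1 hs.1, hs.2⟩]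
  have hAF : A ⊆ p ⁻¹' u.1 := by
    rintro _ ⟨s, hs, rfl⟩
    have hsI : s ∈ unitInterval := ⟨le_trans (σ n).2.1 hs.1, hs.2⟩
    rw [hGeq s hs]
    show p (Γ ⟨s, hsI⟩) ∈ u.1
    have hps : p (Γ ⟨s, hsI⟩) = γfun ⟨s, hsI⟩ := hΓlift ⟨s, hsI⟩
    rw [hps]
    by_cases hs1 : s < 1
    · have hd : γfun ⟨s, hsI⟩ = p (γhat ⟨⟨s, hsI⟩, hs1⟩) := by
        simp only [hγfun]
        rw [dif_pos (show ((⟨s, hsI⟩ : unitInterval) : ℝ) < 1 from hs1)]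
      rw [hd]
      exact hn (hχsub n (key2 n ⟨s, hsI⟩ hs1 hs.1))
    · have h1 : (⟨s, hsI⟩ : unitInterval) = 1 := hone _ hs1
      rw [h1, hγfun1]
      exact u.2.2.2
  have hσA : Γ (σ n) ∈ A := by
    refine ⟨(σ n : ℝ), ⟨le_refl _, (σ n).2.2⟩, ?_⟩
    rw [hGeq _ ⟨le_refl _, (σ n).2.2⟩]
  have hσχ : Γ (σ n) ∈ χ u := by
    rw [hΓeq (σ n) (hσlt n)]
    exact hχmono (uu n) u hn (key2 n (σ n) (hσlt n) (le_refl _))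
  have h1A : Γ 1 ∈ A := by
    refine ⟨1, ⟨(σ n).2.2, le_refl _⟩, ?_⟩
    rw [hGeq 1 ⟨(σ n).2.2, le_refl _⟩]
    exact congrArg Γ (Subtype.ext rfl)
  obtain ⟨x₀, hx₀, hueq⟩ := hχcomp u
  have hueq' : χ u = connectedComponentIn (p ⁻¹' u.1) (Γ (σ n)) := by
    rw [hueq]
    exact connectedComponentIn_eq (hueq ▸ hσχ)
  have hAsub : A ⊆ χ u := by
    rw [hueq']
    exact hApre.subset_connectedComponentIn hσA hAF
  exact hAsub h1A

end Backward

theorem stmt13 {X Y : Type*} [TopologicalSpace X] [TopologicalSpace Y]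
    [T2Space X] [T2Space Y] [FirstCountableTopology X] [FirstCountableTopology Y]
    [LocallyPathConnectedSpace X] [LocallyPathConnectedSpace Y]
    [ConnectedSpace X] [ConnectedSpace Y]
    (p : X → Y) (hp : IsSpread p) (X₁ : Set X) (Y₁ : Set Y)
    (hX₁ : Portly X X₁) (hY₁ : Portly Y Y₁)
    (hmap : Set.MapsTo p X₁ Y₁)
    (hcov : IsCoveringMap (Set.MapsTo.restrict p X₁ Y₁ hmap)) :
    IsCompleteSpread p ↔
      ∀ γ : C(unitInterval, Y), ∀ γhat : {t : unitInterval // (t : ℝ) < 1} → X,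
        Continuous γhat → (∀ t, γhat t ∈ X₁) → (∀ t, p (γhat t) = γ t.1) →
        ∃ Γ : unitInterval → X, Continuous Γ ∧ (∀ t, p (Γ t) = γ t) ∧
          ∀ (t : unitInterval) (h : (t : ℝ) < 1), Γ t = γhat ⟨t, h⟩ := by
  constructor
  · intro hcomplete γ γhat hcont _ hlift
    exact forward_dir p hp hcomplete γ γhat hcont hlift
  · intro H
    exact backward_dir p hp X₁ hX₁ H
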